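/- Let χ = 2ρ̌ and let ξ_Π = Σ_{Π_M ⊆ Π} v^{|Π|−|Π_M|} · w₀(M). Then for every proper subset Π_{M₁} ⊊ Π one has (ξ_Π : w₀(M₁)) = 0; equivalently, Σ_{Π_M ⊆ Π} v^{|Π|−|Π_M|} (−v)^{#(Π_M ∨ Π_{M₁})} = 0 in ℚ(v). -/

import Mathlib

open scoped InnerProductSpace

noncomputable section

/-- The reflection `s_α` in the hyperplane orthogonal to `α`. -/
def sRefl {V : Type*} [NormedAddCommGroup V] [InnerProductSpace ℝ V] [FiniteDimensional ℝ V]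
    (α : V) : V ≃ₗᵢ[ℝ] V :=
  Submodule.reflection (ℝ ∙ α)ᗮ

/-- `r_n(w) = {α ∈ Δ : ⟨α, χ⟩ = n and wα ∈ Δ⁺}`. -/
def rW {V : Type*} [NormedAddCommGroup V] [InnerProductSpace ℝ V]
    (Δ pos : Finset V) (χ : V) (n : ℤ) (w : V ≃ₗᵢ[ℝ] V) : Set V :=
  {α : V | α ∈ Δ ∧ ⟪α, χ⟫_ℝ = (n : ℝ) ∧ w α ∈ pos}

/-- `τ(w₁,w₂) = #(r₂(w₁) ∆ r₂(w₂)) − #(r₀(w₁) ∆ r₀(w₂))`. -/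
def tau {V : Type*} [NormedAddCommGroup V] [InnerProductSpace ℝ V]
    (Δ pos : Finset V) (χ : V) (w₁ w₂ : V ≃ₗᵢ[ℝ] V) : ℤ :=
  ((symmDiff (rW Δ pos χ 2 w₁) (rW Δ pos χ 2 w₂)).ncard : ℤ)
    - ((symmDiff (rW Δ pos χ 0 w₁) (rW Δ pos χ 0 w₂)).ncard : ℤ)

/-- The symmetric `ℚ(v)`-bilinear form on the free `ℚ(v)`-module `K` with basis `W`,
determined on basis elements by `(w₁ : w₂) = (−v)^{τ(w₁,w₂)}`. -/
def Bform {V : Type*} [NormedAddCommGroup V] [InnerProductSpace ℝ V]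
    (Δ pos : Finset V) (χ : V) (W : Subgroup (V ≃ₗᵢ[ℝ] V)) :
    (W →₀ RatFunc ℚ) →ₗ[RatFunc ℚ] (W →₀ RatFunc ℚ) →ₗ[RatFunc ℚ] RatFunc ℚ :=
  Finsupp.linearCombination (RatFunc ℚ) fun w : W =>
    Finsupp.linearCombination (RatFunc ℚ) fun w' : W =>
      (-(RatFunc.X : RatFunc ℚ)) ^ (tau Δ pos χ (w : V ≃ₗᵢ[ℝ] V) (w' : V ≃ₗᵢ[ℝ] V))

/-- `ξ_{M'} = Σ_{Π_M ⊆ Π_{M'}} v^{|Π_{M'}|−|Π_M|} · w₀(M)` in `K`. -/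
def xiElt {V : Type*} [NormedAddCommGroup V] [InnerProductSpace ℝ V]
    (W : Subgroup (V ≃ₗᵢ[ℝ] V)) (w0M : Finset V → W) (M' : Finset V) :
    W →₀ RatFunc ℚ :=
  ∑ M ∈ M'.powerset,
    Finsupp.single (w0M M) ((RatFunc.X : RatFunc ℚ) ^ (M'.card - M.card))


lemma sRefl_apply {V : Type*} [NormedAddCommGroup V] [InnerProductSpace ℝ V]
    [FiniteDimensional ℝ V] (α x : V) :
    sRefl α x = x - (2 * ⟪α, x⟫_ℝ / ⟪α, α⟫_ℝ) • α := by
  rw [sRefl, Submodule.reflection_apply, Submodule.starProjection_orthogonal_val,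
    Submodule.starProjection_singleton, real_inner_self_eq_norm_sq]
  rw [mul_div_assoc]
  simp only [RCLike.ofReal_real_eq_id, id_eq]
  module

lemma sRefl_sRefl {V : Type*} [NormedAddCommGroup V] [InnerProductSpace ℝ V]
    [FiniteDimensional ℝ V] (α x : V) : sRefl α (sRefl α x) = x := by
  simp [sRefl, Submodule.reflection_reflection]

lemma sRefl_self {V : Type*} [NormedAddCommGroup V] [InnerProductSpace ℝ V]
    [FiniteDimensional ℝ V] (α : V) (h : α ≠ 0) : sRefl α α = -α := by
  rw [sRefl_apply]
  have h2 : ⟪α, α⟫_ℝ ≠ 0 := inner_self_ne_zero.mpr h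
  rw [mul_div_assoc, div_self h2]
  module

set_option maxHeartbeats 1000000 in
theorem stmt11
    {V : Type*} [NormedAddCommGroup V] [InnerProductSpace ℝ V] [FiniteDimensional ℝ V]
    (Δ pos Pi : Finset V) (χ : V)
    -- root system axioms: finite (a `Finset`), spanning, reduced, crystallographic,
    -- stable under negation and under the reflections `s_α`
    (hspan : Submodule.span ℝ (Δ : Set V) = ⊤)
    (hzero : (0 : V) ∉ Δ)
    (hsym : ∀ α ∈ Δ, -α ∈ Δ)
    (hred : ∀ α ∈ Δ, ∀ t : ℝ, t • α ∈ Δ → t = 1 ∨ t = -1)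
    (hcrys : ∀ α ∈ Δ, ∀ β ∈ Δ, ∃ n : ℤ, 2 * ⟪β, α⟫_ℝ / ⟪α, α⟫_ℝ = (n : ℝ))
    (hrefl : ∀ α ∈ Δ, ∀ β ∈ Δ, sRefl α β ∈ Δ)
    -- positive roots and simple roots
    (hposΔ : pos ⊆ Δ)
    (hpart : ∀ α ∈ Δ, (α ∈ pos ↔ -α ∉ pos))
    (hPipos : Pi ⊆ pos)
    (hindep : LinearIndependent ℝ (fun β : (Pi : Set V) => (β : V)))
    (hcomb : ∀ α ∈ pos, ∃ c : V → ℕ, α = ∑ β ∈ Pi, (c β : ℝ) • β)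
    -- the Weyl group, generated by the reflections in the roots
    (W : Subgroup (V ≃ₗᵢ[ℝ] V))
    (hW : W = Subgroup.closure {e : V ≃ₗᵢ[ℝ] V | ∃ α ∈ Δ, e = sRefl α})
    -- `χ = 2ρ̌` is the sum of the positive coroots `β̌ = 2β/(β,β)`
    (hchi : χ = ∑ β ∈ pos, ((2 : ℝ) / ⟪β, β⟫_ℝ) • β)
    -- for each `Π_M ⊆ Π`, `w₀(M) ∈ W` is the element of the subgroup `W_M` generated
    -- by the reflections in `Π_M` mapping every positive root in `Δ ∩ span Π_M` to a
    -- negative root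
    (w0M : Finset V → W)
    (hw0MW : ∀ M, M ⊆ Pi →
      (w0M M : V ≃ₗᵢ[ℝ] V) ∈ Subgroup.closure {e : V ≃ₗᵢ[ℝ] V | ∃ α ∈ M, e = sRefl α})
    (hw0Mneg : ∀ M, M ⊆ Pi → ∀ α ∈ Δ,
      α ∈ Submodule.span ℝ (M : Set V) → α ∈ pos → -((w0M M : V ≃ₗᵢ[ℝ] V) α) ∈ pos)
    (M₁ : Finset V) (hM₁ : M₁ ⊂ Pi) :
    Bform Δ pos χ W (xiElt W w0M Pi) (Finsupp.single (w0M M₁) 1) = 0 ∧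
    ∑ M ∈ Pi.powerset,
        (RatFunc.X : RatFunc ℚ) ^ (Pi.card - M.card)
          * (-(RatFunc.X : RatFunc ℚ)) ^ (symmDiff (M : Set V) (M₁ : Set V)).ncard
      = 0 := by
  classical
  have hPiΔ : Pi ⊆ Δ := hPipos.trans hposΔ
  have hne0 : ∀ α ∈ Δ, α ≠ (0 : V) := fun α hα h0 => hzero (h0 ▸ hα)
  have hinner0 : ∀ α ∈ Δ, ⟪α, α⟫_ℝ ≠ 0 := fun α hα => inner_self_ne_zero.mpr (hne0 α hα)
  have hΔalt : ∀ α ∈ Δ, α ∉ pos → -α ∈ pos := by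
    intro α hα h
    by_contra hn
    exact h ((hpart α hα).mpr hn)
  -- Pi spans V
  have hPosSpan : ∀ α ∈ pos, α ∈ Submodule.span ℝ (Pi : Set V) := by
    intro α hα
    obtain ⟨c, hc⟩ := hcomb α hα
    rw [hc]
    exact Submodule.sum_mem _ fun β hβ =>
      Submodule.smul_mem _ _ (Submodule.subset_span hβ)
  have hspanPi : Submodule.span ℝ (Pi : Set V) = ⊤ := by
    rw [eq_top_iff, ← hspan, Submodule.span_le]
    intro α hα
    by_cases hp : α ∈ pos
    · exact hPosSpan α hp
    · have := hPosSpan _ (hΔalt α hα hp)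
      simpa using Submodule.neg_mem _ this
  -- the basis given by Pi
  let b : Module.Basis (Pi : Set V) ℝ V :=
    Module.Basis.mk hindep (by rw [Subtype.range_coe, hspanPi])
  have hbapply : ∀ (i : (Pi : Set V)), b i = (i : V) := fun i => Module.Basis.mk_apply _ _ _
  have hreprPi : ∀ (β : V) (h : β ∈ Pi), b.repr β = Finsupp.single ⟨β, h⟩ 1 := by
    intro β h
    have h2 := b.repr_self ⟨β, h⟩
    rw [hbapply] at h2
    exact h2
  have hreprSum : ∀ (c : V → ℝ) (i : (Pi : Set V)), b.repr (∑ β ∈ Pi, c β • β) i = c i := by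
    intro c i
    rw [map_sum, Finsupp.finset_sum_apply,
      Finset.sum_eq_single_of_mem (i : V) i.2]
    · rw [map_smul, hreprPi _ i.2, Finsupp.smul_apply, Subtype.coe_eta,
        Finsupp.single_eq_same, smul_eq_mul, mul_one]
    · intro β hβ hne
      rw [map_smul, hreprPi β hβ, Finsupp.smul_apply,
        Finsupp.single_eq_of_ne (fun e => hne (congrArg Subtype.val e).symm), smul_zero]
  have hposCoeff : ∀ α ∈ pos, ∀ i : (Pi : Set V), 0 ≤ b.repr α i := by
    intro α hα i
    obtain ⟨c, hc⟩ := hcomb α hα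
    rw [hc, hreprSum]
    exact Nat.cast_nonneg _
  -- a positive root other than a given simple root has a nonzero coefficient elsewhere
  have hOtherCoeff : ∀ γ ∈ Pi, ∀ β ∈ pos, β ≠ γ →
      ∃ i : (Pi : Set V), (i : V) ≠ γ ∧ b.repr β i ≠ 0 := by
    intro γ hγ β hβ hne
    by_contra h
    push_neg at h
    have hrepr : b.repr β = Finsupp.single (⟨γ, hγ⟩ : (Pi : Set V)) (b.repr β ⟨γ, hγ⟩) := by
      ext i
      by_cases hi : (i : V) = γ
      · have : i = (⟨γ, hγ⟩ : (Pi : Set V)) := Subtype.ext hi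
        rw [this, Finsupp.single_eq_same]
      · rw [h i hi, Finsupp.single_eq_of_ne (fun e => hi (by rw [e]))]
    have hβeq : β = (b.repr β ⟨γ, hγ⟩) • γ := by
      have h2 := congrArg b.repr.symm hrepr
      rw [LinearEquiv.symm_apply_apply, Module.Basis.repr_symm_single, hbapply] at h2
      exact h2
    rcases hred γ (hPiΔ hγ) _ (by rw [← hβeq]; exact hposΔ hβ) with h1 | h1
    · rw [h1, one_smul] at hβeq
      exact hne hβeq
    · rw [h1, neg_one_smul] at hβeq
      rw [hβeq] at hβ
      exact (hpart γ (hPiΔ hγ)).mp (hPipos hγ) hβ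
  -- simple reflections preserve positivity away from the simple root
  have hsreflPos : ∀ γ ∈ Pi, ∀ β ∈ pos, β ≠ γ → sRefl γ β ∈ pos ∧ sRefl γ β ≠ γ := by
    intro γ hγ β hβ hne
    have hγΔ := hPiΔ hγ
    have hβΔ := hposΔ hβ
    have hδΔ : sRefl γ β ∈ Δ := hrefl γ hγΔ β hβΔ
    obtain ⟨i, hiγ, hi0⟩ := hOtherCoeff γ hγ β hβ hne
    have hip : 0 < b.repr β i := lt_of_le_of_ne (hposCoeff β hβ i) (Ne.symm hi0)
    have hδi : b.repr (sRefl γ β) i = b.repr β i := by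
      rw [sRefl_apply, map_sub, map_smul, Finsupp.sub_apply, Finsupp.smul_apply,
        hreprPi γ hγ, Finsupp.single_eq_of_ne (fun e => hiγ (congrArg Subtype.val e)),
        smul_zero, sub_zero]
    have hδpos : sRefl γ β ∈ pos := by
      by_contra hn
      have h2 := hposCoeff _ (hΔalt _ hδΔ hn) i
      rw [map_neg, Finsupp.neg_apply, hδi] at h2
      linarith
    refine ⟨hδpos, fun he => ?_⟩
    have h3 : β = -γ := by
      have h4 := congrArg (sRefl γ) he
      rwa [sRefl_sRefl, sRefl_self γ (hne0 γ hγΔ)] at h4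
    rw [h3] at hβ
    exact (hpart γ hγΔ).mp (hPipos hγ) hβ
  -- each simple root pairs to 2 with χ
  have hchiPi : ∀ γ ∈ Pi, ⟪γ, χ⟫_ℝ = 2 := by
    intro γ hγ
    have hγΔ := hPiΔ hγ
    have hγpos := hPipos hγ
    rw [hchi, inner_sum]
    simp_rw [real_inner_smul_right]
    rw [← Finset.sum_erase_add _ _ hγpos]
    have h0 : ∑ β ∈ pos.erase γ, 2 / ⟪β, β⟫_ℝ * ⟪γ, β⟫_ℝ = 0 := by
      apply Finset.sum_involution (g := fun β _ => sRefl γ β)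
      · intro β hβ
        have hβ' := Finset.mem_of_mem_erase hβ
        have h1 : ⟪sRefl γ β, sRefl γ β⟫_ℝ = ⟪β, β⟫_ℝ :=
          (sRefl γ).inner_map_map β β
        have h2 : ⟪γ, sRefl γ β⟫_ℝ = -⟪γ, β⟫_ℝ := by
          have h0 := hinner0 γ hγΔ
          rw [sRefl_apply, inner_sub_right, real_inner_smul_right]
          field_simp
          ring
        rw [h1, h2]
        ring
      · intro β hβ hf he
        apply hf
        have h1 := sRefl_apply γ β
        rw [he] at h1
        have h2 : (2 * ⟪γ, β⟫_ℝ / ⟪γ, γ⟫_ℝ) • γ = 0 := by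
          have := sub_eq_self.mp h1.symm
          exact this
        rcases smul_eq_zero.mp h2 with h3 | h3
        · have h4 : ⟪γ, β⟫_ℝ = 0 := by
            field_simp [hinner0 γ hγΔ] at h3
            have h5 := (div_eq_zero_iff.mp h3).resolve_right (hinner0 γ hγΔ)
            linarith
          rw [h4, mul_zero]
        · exact absurd h3 (hne0 γ hγΔ)
      · intro β hβ
        obtain ⟨hp, hne⟩ := hsreflPos γ hγ β (Finset.mem_of_mem_erase hβ)
          (Finset.ne_of_mem_erase hβ)
        exact Finset.mem_erase.mpr ⟨hne, hp⟩
      · intro β hβ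
        exact sRefl_sRefl γ β
    rw [h0, zero_add, div_mul_cancel₀ 2 (hinner0 γ hγΔ)]
  -- pairing of any positive root with χ
  have hlevel : ∀ α ∈ pos, ∃ m : ℕ, 1 ≤ m ∧ ⟪α, χ⟫_ℝ = 2 * m := by
    intro α hα
    obtain ⟨c, hc⟩ := hcomb α hα
    refine ⟨∑ β ∈ Pi, c β, ?_, ?_⟩
    · by_contra h
      push_neg at h
      have h0 : ∀ β ∈ Pi, c β = 0 :=
        fun β hβ => (Finset.sum_eq_zero_iff.mp (Nat.lt_one_iff.mp h)) β hβ
      have : α = 0 := by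
        rw [hc]
        exact Finset.sum_eq_zero fun β hβ => by rw [h0 β hβ]; simp
      exact hne0 α (hposΔ hα) this
    · rw [hc, sum_inner]
      rw [Finset.sum_congr rfl
        (fun β hβ => by rw [real_inner_smul_left, hchiPi β hβ])]
      rw [← Finset.sum_mul]
      push_cast
      ring
  have hlevel0 : ∀ α ∈ Δ, ⟪α, χ⟫_ℝ ≠ 0 := by
    intro α hα
    by_cases hp : α ∈ pos
    · obtain ⟨m, hm, h⟩ := hlevel α hp
      rw [h]
      have : (1 : ℝ) ≤ m := by exact_mod_cast hm
      positivity
    · obtain ⟨m, hm, h⟩ := hlevel _ (hΔalt α hα hp)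
      have h2 : ⟪α, χ⟫_ℝ = -(2 * m) := by
        rw [← h, inner_neg_left, neg_neg]
      rw [h2]
      have : (1 : ℝ) ≤ m := by exact_mod_cast hm
      intro hcon
      nlinarith
  have hlevel2 : ∀ α ∈ Δ, (⟪α, χ⟫_ℝ = 2 ↔ α ∈ Pi) := by
    intro α hα
    constructor
    · intro h2
      by_cases hp : α ∈ pos
      · obtain ⟨c, hc⟩ := hcomb α hp
        have hval : ⟪α, χ⟫_ℝ = 2 * (∑ β ∈ Pi, c β : ℕ) := by
          rw [hc, sum_inner, Finset.sum_congr rfl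
            (fun β hβ => by rw [real_inner_smul_left, hchiPi β hβ]),
            ← Finset.sum_mul]
          push_cast
          ring
        have hsum : (∑ β ∈ Pi, c β : ℕ) = 1 := by
          have : (2 : ℝ) * (∑ β ∈ Pi, c β : ℕ) = 2 := by rw [← hval, h2]
          have h3 : ((∑ β ∈ Pi, c β : ℕ) : ℝ) = 1 := by linarith
          exact_mod_cast h3
        obtain ⟨β₀, hβ₀, hc₀⟩ := Finset.exists_ne_zero_of_sum_ne_zero
          (by rw [hsum]; exact one_ne_zero)
        have hrest : ∀ β ∈ Pi.erase β₀, c β = 0 := by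
          have h4 := Finset.add_sum_erase Pi c hβ₀
          rw [hsum] at h4
          have h5 : c β₀ = 1 ∧ ∑ β ∈ Pi.erase β₀, c β = 0 := by omega
          exact fun β hβ => (Finset.sum_eq_zero_iff.mp h5.2) β hβ
        have hcβ₀ : c β₀ = 1 := by
          have h4 := Finset.add_sum_erase Pi c hβ₀
          rw [hsum] at h4
          have h6 := Finset.sum_eq_zero_iff.mpr hrest
          omega
        have : α = β₀ := by
          rw [hc, ← Finset.add_sum_erase Pi _ hβ₀, hcβ₀,
            Finset.sum_eq_zero (fun β hβ => by rw [hrest β hβ]; simp)]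
          simp
        rw [this]
        exact hβ₀
      · obtain ⟨m, hm, h⟩ := hlevel _ (hΔalt α hα hp)
        have h3 : ⟪α, χ⟫_ℝ = -(2 * m) := by rw [← h, inner_neg_left, neg_neg]
        rw [h3] at h2
        have : (1 : ℝ) ≤ m := by exact_mod_cast hm
        nlinarith
    · intro h
      exact hchiPi α h
  -- elements of the subgroups generated by reflections preserve Δ and move vectors
  -- within the span of the relevant roots
  have hstable : ∀ (M : Finset V), M ⊆ Δ → ∀ w ∈ Subgroup.closure
      {e : V ≃ₗᵢ[ℝ] V | ∃ α ∈ M, e = sRefl α},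
      (∀ β ∈ Δ, w β ∈ Δ) ∧ (∀ x : V, w x - x ∈ Submodule.span ℝ (M : Set V)) := by
    intro M hM w hw
    induction hw using Subgroup.closure_induction with
    | mem x hx =>
      obtain ⟨α, hα, rfl⟩ := hx
      constructor
      · intro β hβ
        exact hrefl α (hM hα) β hβ
      · intro x
        rw [sRefl_apply]
        have : x - (2 * ⟪α, x⟫_ℝ / ⟪α, α⟫_ℝ) • α - x = -((2 * ⟪α, x⟫_ℝ / ⟪α, α⟫_ℝ) • α) := by
          abel
        rw [this]
        exact Submodule.neg_mem _ (Submodule.smul_mem _ _ (Submodule.subset_span hα))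
    | one =>
      constructor
      · intro β hβ
        simpa using hβ
      · intro x
        simpa using Submodule.zero_mem _
    | mul x y hx hy ihx ihy =>
      constructor
      · intro β hβ
        have : (x * y) β = x (y β) := rfl
        rw [this]
        exact ihx.1 _ (ihy.1 β hβ)
      · intro v
        have h1 : (x * y) v - v = (x (y v) - y v) + (y v - v) := by
          have : (x * y) v = x (y v) := rfl
          rw [this]; abel
        rw [h1]
        exact Submodule.add_mem _ (ihx.2 _) (ihy.2 _)
    | inv x hx ihx =>
      constructor
      · intro β hβ
        have himg : Δ.image x = Δ := by
          apply Finset.eq_of_subset_of_card_le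
          · intro b hb
            obtain ⟨a, ha, rfl⟩ := Finset.mem_image.mp hb
            exact ihx.1 a ha
          · rw [Finset.card_image_of_injective _ x.injective]
        rw [← himg] at hβ
        obtain ⟨γ, hγ, hxγ⟩ := Finset.mem_image.mp hβ
        have : x⁻¹ β = γ := by
          rw [← hxγ]
          exact x.symm_apply_apply γ
        rw [this]
        exact hγ
      · intro v
        have h1 := ihx.2 (x⁻¹ v)
        have h2 : x (x⁻¹ v) = v := x.apply_symm_apply v
        rw [h2] at h1
        have h3 := Submodule.neg_mem _ h1
        have h4 : -(v - x⁻¹ v) = x⁻¹ v - v := by abel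
        rw [h4] at h3
        exact h3
  have hw0MΔ : ∀ M, M ⊆ Pi → ∀ β ∈ Δ, (w0M M : V ≃ₗᵢ[ℝ] V) β ∈ Δ :=
    fun M hM => (hstable M (hM.trans hPiΔ) _ (hw0MW M hM)).1
  have hw0Mspan : ∀ M, M ⊆ Pi → ∀ x : V,
      (w0M M : V ≃ₗᵢ[ℝ] V) x - x ∈ Submodule.span ℝ (M : Set V) :=
    fun M hM => (hstable M (hM.trans hPiΔ) _ (hw0MW M hM)).2
  -- w0M M sends a simple root to a positive root iff the root is outside M
  have hr2 : ∀ M, M ⊆ Pi → ∀ α, ∀ hα : α ∈ Pi,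
      ((w0M M : V ≃ₗᵢ[ℝ] V) α ∈ pos ↔ α ∉ M) := by
    intro M hM α hα
    have hαΔ := hPiΔ hα
    have huαΔ : (w0M M : V ≃ₗᵢ[ℝ] V) α ∈ Δ := hw0MΔ M hM α hαΔ
    constructor
    · intro hp hmem
      exact (hpart _ huαΔ).mp hp
        (hw0Mneg M hM α hαΔ (Submodule.subset_span hmem) (hPipos hα))
    · intro hmem
      have hsp := hw0Mspan M hM α
      have hcoord : b.repr ((w0M M : V ≃ₗᵢ[ℝ] V) α) ⟨α, hα⟩ = 1 := by
        have h1 : b.repr ((w0M M : V ≃ₗᵢ[ℝ] V) α - α) ⟨α, hα⟩ = 0 := by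
          have hM' : (M : Set V) ⊆ b '' (Subtype.val ⁻¹' (M : Set V)) := by
            intro x hx
            refine ⟨⟨x, hM hx⟩, hx, hbapply _⟩
          have h2 : (w0M M : V ≃ₗᵢ[ℝ] V) α - α ∈
              Submodule.span ℝ (b '' (Subtype.val ⁻¹' (M : Set V))) :=
            Submodule.span_mono hM' hsp
          have h3 := (b.mem_span_image).mp h2
          rw [← Finsupp.notMem_support_iff]
          intro hmem2
          exact hmem (h3 hmem2)
        have h2 : b.repr α ⟨α, hα⟩ = 1 := by
          rw [hreprPi α hα, Finsupp.single_eq_same]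
        have h3 : b.repr ((w0M M : V ≃ₗᵢ[ℝ] V) α) ⟨α, hα⟩
            = b.repr ((w0M M : V ≃ₗᵢ[ℝ] V) α - α) ⟨α, hα⟩ + b.repr α ⟨α, hα⟩ := by
          rw [map_sub, Finsupp.sub_apply]
          ring
        rw [h3, h1, h2, zero_add]
      by_contra hp
      have h4 := hposCoeff _ (hΔalt _ huαΔ hp) ⟨α, hα⟩
      rw [map_neg, Finsupp.neg_apply, hcoord] at h4
      linarith
  -- identification of the rW sets
  have hrW2 : ∀ M, M ⊆ Pi → rW Δ pos χ 2 (w0M M) = ((Pi \ M : Finset V) : Set V) := by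
    intro M hM
    ext α
    simp only [rW, Set.mem_setOf_eq, Finset.coe_sdiff, Set.mem_diff, Finset.mem_coe,
      Finset.mem_sdiff]
    constructor
    · rintro ⟨hΔ2, h2, hp⟩
      have hPi2 : α ∈ Pi := (hlevel2 α hΔ2).mp (by exact_mod_cast h2)
      exact ⟨hPi2, (hr2 M hM α hPi2).mp hp⟩
    · rintro ⟨hPi2, hM2⟩
      refine ⟨hPiΔ hPi2, ?_, (hr2 M hM α hPi2).mpr hM2⟩
      rw [hchiPi α hPi2]
      norm_num
  have hrW0 : ∀ w : V ≃ₗᵢ[ℝ] V, rW Δ pos χ 0 w = (∅ : Set V) := by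
    intro w
    ext α
    simp only [rW, Set.mem_setOf_eq, Set.mem_empty_iff_false, iff_false]
    rintro ⟨hΔ2, h, -⟩
    exact hlevel0 α hΔ2 (by exact_mod_cast h)
  -- computation of tau
  have htau : ∀ M, M ⊆ Pi →
      tau Δ pos χ (w0M M : V ≃ₗᵢ[ℝ] V) (w0M M₁ : V ≃ₗᵢ[ℝ] V)
        = ((symmDiff M M₁).card : ℤ) := by
    intro M hM
    rw [tau, hrW2 M hM, hrW2 M₁ hM₁.subset, hrW0, hrW0]
    have h0 : (symmDiff (∅ : Set V) (∅ : Set V)).ncard = 0 := by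
      simp
    rw [h0]
    have h1 : symmDiff ((Pi \ M : Finset V) : Set V) ((Pi \ M₁ : Finset V) : Set V)
        = ((symmDiff (Pi \ M) (Pi \ M₁) : Finset V) : Set V) :=
      (Finset.coe_symmDiff).symm
    rw [h1, Set.ncard_coe_finset]
    have h2 : symmDiff (Pi \ M) (Pi \ M₁) = symmDiff M M₁ := by
      ext x
      have h3 : x ∈ M → x ∈ Pi := fun hx => hM hx
      have h4 : x ∈ M₁ → x ∈ Pi := fun hx => hM₁.subset hx
      simp only [Finset.mem_symmDiff, Finset.mem_sdiff]
      tauto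
    rw [h2]
    ring
  -- the key combinatorial identity
  have hcomb0 : ∑ M ∈ Pi.powerset,
      (RatFunc.X : RatFunc ℚ) ^ (Pi.card - M.card)
        * (-(RatFunc.X : RatFunc ℚ)) ^ (symmDiff M M₁).card = 0 := by
    have key := Finset.prod_add
      (fun α : V => if α ∈ M₁ then (1 : RatFunc ℚ) else -RatFunc.X)
      (fun α : V => RatFunc.X * (if α ∈ M₁ then -RatFunc.X else 1)) Pi
    obtain ⟨α₀, hα₀Pi, hα₀M₁⟩ := Finset.exists_of_ssubset hM₁
    have hzero2 : ∏ α ∈ Pi, ((if α ∈ M₁ then (1 : RatFunc ℚ) else -RatFunc.X)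
        + RatFunc.X * (if α ∈ M₁ then -RatFunc.X else 1)) = 0 := by
      apply Finset.prod_eq_zero hα₀Pi
      rw [if_neg hα₀M₁, if_neg hα₀M₁]
      ring
    have hterm : ∀ M ∈ Pi.powerset,
        (∏ α ∈ M, (if α ∈ M₁ then (1 : RatFunc ℚ) else -RatFunc.X))
          * ∏ α ∈ Pi \ M, (RatFunc.X * (if α ∈ M₁ then -RatFunc.X else 1))
        = (RatFunc.X : RatFunc ℚ) ^ (Pi.card - M.card)
          * (-(RatFunc.X : RatFunc ℚ)) ^ (symmDiff M M₁).card := by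
      intro M hMmem
      have hM := Finset.mem_powerset.mp hMmem
      have hp1 : (∏ α ∈ M, (if α ∈ M₁ then (1 : RatFunc ℚ) else -RatFunc.X))
          = (-(RatFunc.X : RatFunc ℚ)) ^ (M \ M₁).card := by
        rw [Finset.prod_ite, Finset.prod_const_one, one_mul, Finset.prod_const]
        congr 1
        rw [Finset.sdiff_eq_filter]
      have hp2 : (∏ α ∈ Pi \ M, (RatFunc.X * (if α ∈ M₁ then -RatFunc.X else 1)))
          = (RatFunc.X : RatFunc ℚ) ^ (Pi.card - M.card)
            * (-(RatFunc.X : RatFunc ℚ)) ^ (M₁ \ M).card := by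
        have hfil : Finset.filter (fun x => x ∈ M₁) (Pi \ M) = M₁ \ M := by
          ext x
          have h3 : x ∈ M₁ → x ∈ Pi := fun hx => hM₁.subset hx
          simp only [Finset.mem_filter, Finset.mem_sdiff]
          tauto
        rw [Finset.prod_mul_distrib, Finset.prod_const, Finset.card_sdiff_of_subset hM,
          Finset.prod_ite, Finset.prod_const_one, mul_one, Finset.prod_const, hfil]
      have hcard : (symmDiff M M₁).card = (M \ M₁).card + (M₁ \ M).card := by
        have : symmDiff M M₁ = (M \ M₁) ∪ (M₁ \ M) := by
          ext x
          simp only [Finset.mem_symmDiff, Finset.mem_union, Finset.mem_sdiff]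
        rw [this, Finset.card_union_of_disjoint disjoint_sdiff_sdiff]
      rw [hp1, hp2, hcard, pow_add]
      ring
    calc ∑ M ∈ Pi.powerset,
        (RatFunc.X : RatFunc ℚ) ^ (Pi.card - M.card)
          * (-(RatFunc.X : RatFunc ℚ)) ^ (symmDiff M M₁).card
        = ∑ M ∈ Pi.powerset,
          (∏ α ∈ M, (if α ∈ M₁ then (1 : RatFunc ℚ) else -RatFunc.X))
            * ∏ α ∈ Pi \ M, (RatFunc.X * (if α ∈ M₁ then -RatFunc.X else 1)) :=
          (Finset.sum_congr rfl fun M hMmem => (hterm M hMmem).symm)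
      _ = ∏ α ∈ Pi, ((if α ∈ M₁ then (1 : RatFunc ℚ) else -RatFunc.X)
            + RatFunc.X * (if α ∈ M₁ then -RatFunc.X else 1)) := key.symm
      _ = 0 := hzero2
  -- evaluate the bilinear form
  have hB : Bform Δ pos χ W (xiElt W w0M Pi) (Finsupp.single (w0M M₁) 1)
      = ∑ M ∈ Pi.powerset,
        (RatFunc.X : RatFunc ℚ) ^ (Pi.card - M.card)
          * (-(RatFunc.X : RatFunc ℚ)) ^ (symmDiff M M₁).card := by
    rw [Bform, xiElt, map_sum]
    rw [LinearMap.coe_sum, Finset.sum_apply]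
    apply Finset.sum_congr rfl
    intro M hMmem
    have hM := Finset.mem_powerset.mp hMmem
    rw [Finsupp.linearCombination_single, LinearMap.smul_apply,
      Finsupp.linearCombination_single, one_smul, smul_eq_mul]
    rw [htau M hM, zpow_natCast]
  exact ⟨by rw [hB, hcomb0], by
    have : ∀ M ∈ Pi.powerset,
        (RatFunc.X : RatFunc ℚ) ^ (Pi.card - M.card)
            * (-(RatFunc.X : RatFunc ℚ)) ^ (symmDiff (M : Set V) (M₁ : Set V)).ncard
          = (RatFunc.X : RatFunc ℚ) ^ (Pi.card - M.card)
            * (-(RatFunc.X : RatFunc ℚ)) ^ (symmDiff M M₁).card := by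
      intro M hMmem
      rw [← Finset.coe_symmDiff, Set.ncard_coe_finset]
    rw [Finset.sum_congr rfl this, hcomb0]⟩
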